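/- Let m ≥ 1, let a_1, …, a_m be integers with a_j ≥ 2 for 1 ≤ j ≤ m−1 and a_m ≥ 1, let n be an integer, and let a > b ≥ 0 be coprime integers with b/a = 1 − 1/(a_1 − 1/(a_2 − ⋯ − 1/a_m)). Then the matrix product [[1,0],[−n,1]]·[[a_1,1],[−1,0]]⋯[[a_{m−1},1],[−1,0]]·[[a_m+1,1],[−1,0]] applied to the column vector (−1,1)ᵀ yields (−a, na+a−b)ᵀ. -/

import Mathlib

/-- Negative (Hirzebruch–Jung) continued fraction:
`ncf [a₁, …, aₘ] = a₁ - 1/(a₂ - 1/(⋯ - 1/aₘ))`. -/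
def ncf : List ℤ → ℚ
  | [] => 0
  | [a] => (a : ℚ)
  | a :: b :: l => (a : ℚ) - 1 / ncf (b :: l)

namespace Stmt1Aux

def M (x : ℤ) : Matrix (Fin 2) (Fin 2) ℤ := !![x, 1; -1, 0]

def f : List ℤ → ℤ × ℤ
  | [] => (1, 0)
  | a :: l => (a * (f l).1 + (f l).2, -(f l).1)

def bump : List ℤ → List ℤ
  | [] => []
  | [a] => [a + 1]
  | a :: b :: l => a :: bump (b :: l)

def Good : List ℤ → Prop
  | [] => False
  | [a] => 1 ≤ a
  | a :: b :: l => 2 ≤ a ∧ Good (b :: l)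

lemma bump_length : ∀ l : List ℤ, (bump l).length = l.length
  | [] => rfl
  | [a] => rfl
  | a :: b :: l => by simp [bump, bump_length (b :: l)]

lemma bump_getD : ∀ (l : List ℤ) (i : ℕ), i < l.length →
    (bump l).getD i 0 = if i = l.length - 1 then l.getD i 0 + 1 else l.getD i 0
  | [], i, h => by simp at h
  | [a], i, h => by
    have hi0 : i = 0 := by simpa using h
    subst hi0
    simp [bump]
  | a :: b :: l, i, h => by
    cases i with
    | zero => simp [bump]
    | succ i =>
      have hi : i < (b :: l).length := by simpa using h
      have ht := bump_getD (b :: l) i hi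
      simp only [List.length_cons, Nat.add_sub_cancel] at ht ⊢
      rw [show bump (a :: b :: l) = a :: bump (b :: l) from rfl,
        List.getD_cons_succ, List.getD_cons_succ, ht]
      by_cases hc : i = l.length
      · simp [hc]
      · simp [hc]

lemma good_of : ∀ (l : List ℤ) (hl : l ≠ []),
    (∀ i, i < l.length - 1 → 2 ≤ l.getD i 0) → 1 ≤ l.getLast hl → Good l
  | [], hl, _, _ => absurd rfl hl
  | [a], _, _, h1 => by simpa [Good, List.getLast] using h1
  | a :: b :: l, _, h2, h1 => by
    refine ⟨?_, good_of (b :: l) (by simp) ?_ ?_⟩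
    · have := h2 0 (by simp)
      simpa using this
    · intro i hi
      have := h2 (i + 1) (by simp at hi ⊢; omega)
      simpa using this
    · rw [List.getLast_cons (by simp)] at h1
      exact h1

lemma key : ∀ (l : List ℤ), Good l →
    1 ≤ -(f l).2 ∧ -(f l).2 ≤ (f l).1 ∧ IsCoprime (f l).1 (f l).2 ∧
      ncf l * (-(f l).2 : ℚ) = ((f l).1 : ℚ)
  | [], h => h.elim
  | [a], h => by
    refine ⟨by simp [f], by simpa [f, Good] using h, ?_, by simp [f, ncf]⟩
    simpa [f] using (isCoprime_one_right (x := a)).neg_right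
  | a :: b :: l, h => by
    obtain ⟨ha, hg⟩ := h
    obtain ⟨h1', h2', hcop', hncf'⟩ := key (b :: l) hg
    set p := (f (b :: l)).1 with hp
    set q := (f (b :: l)).2 with hq
    have hfl1 : (f (a :: b :: l)).1 = a * p + q := rfl
    have hfl2 : (f (a :: b :: l)).2 = -p := rfl
    rw [hfl1, hfl2]
    have hp1 : 1 ≤ p := le_trans h1' h2'
    have hqQ : (-(q : ℚ)) ≠ 0 := by
      have : (1 : ℚ) ≤ -(q : ℚ) := by exact_mod_cast h1'
      linarith
    have hpQ : (p : ℚ) ≠ 0 := by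
      have : (1 : ℚ) ≤ (p : ℚ) := by exact_mod_cast hp1
      linarith
    have hn : ncf (b :: l) = (p : ℚ) / (-(q : ℚ)) := by
      rw [eq_div_iff hqQ]
      exact hncf'
    refine ⟨by simpa using hp1, by nlinarith, ?_, ?_⟩
    · have hco := (hcop'.symm.add_mul_right_left a).neg_right
      have he : a * p + q = q + a * p := by ring
      rw [he]
      exact hco
    · rw [show ncf (a :: b :: l) = (a : ℚ) - 1 / ncf (b :: l) from rfl, hn]
      push_cast
      field_simp
      ring

lemma prod_mulVec : ∀ (b : ℤ) (t : List ℤ),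
    (((bump (b :: t)).map M).prod).mulVec ![-1, 1] =
      ![-(f (b :: t)).1, -(f (b :: t)).2]
  | b, [] => by
    funext i
    fin_cases i <;>
      simp [bump, M, f, Matrix.mulVec, dotProduct, Fin.sum_univ_two]
  | b, c :: t => by
    have ih := prod_mulVec c t
    show ((M b * ((bump (c :: t)).map M).prod).mulVec ![-1, 1]) = _
    rw [← Matrix.mulVec_mulVec, ih]
    funext i
    fin_cases i <;>
      simp [M, f, Matrix.mulVec, dotProduct, Fin.sum_univ_two] <;> ring

end Stmt1Aux

open Stmt1Aux in
theorem stmt_1 (m : ℕ) (hm : 1 ≤ m) (a : Fin m → ℤ) (n : ℤ)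
    (h2 : ∀ j : Fin m, (j : ℕ) < m - 1 → 2 ≤ a j)
    (h1 : 1 ≤ a ⟨m - 1, by omega⟩)
    (A B : ℤ) (hab : B < A) (hb : 0 ≤ B) (hcop : IsCoprime A B)
    (hfrac : (B : ℚ) / (A : ℚ) = 1 - 1 / ncf (List.ofFn a)) :
    (!![1, 0; -n, 1] *
      (List.ofFn (fun j : Fin m =>
        !![if (j : ℕ) = m - 1 then a j + 1 else a j, 1; -1, 0])).prod).mulVec
      ![-1, 1] = ![-A, n * A + A - B] := by
  set l : List ℤ := List.ofFn a with hl
  have hlen : l.length = m := by simp [hl]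
  have hlne : l ≠ [] := by
    rw [← List.length_pos_iff_ne_nil]
    omega
  have hlist : List.ofFn (fun j : Fin m =>
      !![if (j : ℕ) = m - 1 then a j + 1 else a j, 1; -1, 0]) = (bump l).map M := by
    apply List.ext_getElem
    · simp [bump_length, hlen]
    · intro i hi1 hi2
      have him : i < m := by simpa using hi1
      have hil : i < l.length := by omega
      have hbl : i < (bump l).length := by rw [bump_length]; omega
      have hgd := bump_getD l i hil
      rw [List.getD_eq_getElem l 0 hil] at hgd
      rw [List.getD_eq_getElem (bump l) 0 hbl] at hgd
      simp only [List.getElem_ofFn, List.getElem_map]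
      rw [hgd]
      have hli : l[i] = a ⟨i, him⟩ := by simp [hl]
      rw [hli, hlen]
      by_cases hc : i = m - 1 <;> simp [hc, M]
  rw [hlist]
  have hgood : Good l := by
    apply good_of l hlne
    · intro i hi
      have him : i < m := by omega
      have hil : i < l.length := by omega
      rw [List.getD_eq_getElem l 0 hil]
      have hli : l[i] = a ⟨i, him⟩ := by simp [hl]
      rw [hli]
      exact h2 ⟨i, him⟩ (show i < m - 1 by omega)
    · rw [List.getLast_eq_getElem]
      have hlt : l.length - 1 < m := by omega
      have hx : l[l.length - 1] = a ⟨l.length - 1, hlt⟩ := by simp [hl]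
      rw [hx]
      have hfe : (⟨l.length - 1, hlt⟩ : Fin m) = ⟨m - 1, by omega⟩ := by
        ext
        simp [hlen]
      rw [hfe]
      exact h1
  obtain ⟨hq1, hqp, hcp, hncf⟩ := key l hgood
  set p := (f l).1 with hp
  set q := (f l).2 with hq
  have hp1 : 1 ≤ p := le_trans hq1 hqp
  have hA0 : (0 : ℤ) < A := lt_of_le_of_lt hb hab
  have hAne : (A : ℚ) ≠ 0 := by exact_mod_cast hA0.ne'
  have hpQ : (p : ℚ) ≠ 0 := by
    have : (0 : ℤ) < p := hp1
    exact_mod_cast this.ne'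
  have hqQ : (-(q : ℚ)) ≠ 0 := by
    have : (1 : ℚ) ≤ -(q : ℚ) := by exact_mod_cast hq1
    linarith
  have hn : ncf l = (p : ℚ) / (-(q : ℚ)) := by
    rw [eq_div_iff hqQ]
    exact hncf
  rw [hn] at hfrac
  have hZ : B * p = A * (p + q) := by
    have hQ : (B : ℚ) * p = A * (p + q) := by
      field_simp at hfrac
      push_cast
      linarith [hfrac]
    exact_mod_cast hQ
  have hAp : A = p := by
    have hAd : A ∣ p := hcop.dvd_of_dvd_mul_left ⟨p + q, hZ⟩
    have hc2 : IsCoprime p (p + q) := by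
      have := hcp.add_mul_left_right 1
      simpa [add_comm] using this
    have hpd : p ∣ A := hc2.dvd_of_dvd_mul_right ⟨B, by linarith⟩
    exact Int.dvd_antisymm (by omega) (by omega) hAd hpd
  have hBpq : B = p + q := by
    rw [hAp] at hZ
    have hpne : p ≠ 0 := by omega
    exact mul_right_cancel₀ hpne (by linarith)
  obtain ⟨b0, t0, hbt⟩ := List.exists_cons_of_ne_nil hlne
  rw [← Matrix.mulVec_mulVec, hbt, prod_mulVec b0 t0, ← hbt, ← hp, ← hq, hAp, hBpq]
  funext i
  fin_cases i <;>
    simp [Matrix.mulVec, dotProduct, Fin.sum_univ_two] <;> ring
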